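/- Under the two-class Gaussian mixture model and growth assumptions, the cross term κ_n = (4/(n√p))·(μ₂ − μ₁)ᵀ·(−c₂·Σ_{i≤n₁} ω_i + c₁·Σ_{i>n₁} ω_i) converges to 0 almost surely as n → ∞. -/

import Mathlib

open MeasureTheory ProbabilityTheory Matrix Filter Finset
open scoped Topology NNReal

noncomputable section

namespace LSSVM

/-- Squared Euclidean norm of a vector in `ℝ^m`. -/
def sq {m : ℕ} (v : Fin m → ℝ) : ℝ := ∑ j, v j ^ 2

/-- All-ones vector. -/
def ones (n : ℕ) : Fin n → ℝ := fun _ => 1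

/-- Centering projection matrix `P = I - 1 1ᵀ / n`. -/
def Pmat (n : ℕ) : Matrix (Fin n) (Fin n) ℝ :=
  1 - (n : ℝ)⁻¹ • Matrix.of (fun _ _ => (1 : ℝ))

/-- Parameters of the two-class mixture model at a given total sample size:
dimension `p`, class sizes `n₁, n₂`, class means `μ₁, μ₂` and the square roots
`R₁ = C₁^{1/2}`, `R₂ = C₂^{1/2}` of the class covariance matrices. -/
structure Model where
  p : ℕ
  n₁ : ℕ
  n₂ : ℕ
  μ₁ : Fin p → ℝ
  μ₂ : Fin p → ℝ
  R₁ : Matrix (Fin p) (Fin p) ℝ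
  R₂ : Matrix (Fin p) (Fin p) ℝ

namespace Model

variable {Ω : Type*}

/-- Noise vector `ω_i = p^{-1/2} C_{a(i)}^{1/2} z_i` of training point `i`
(class 1 iff `i < n₁`), built from row `i` of the Gaussian array `z`. -/
def omega (M : Model) (z : ℕ → ℕ → Ω → ℝ) (i : ℕ) (w : Ω) : Fin M.p → ℝ :=
  (Real.sqrt M.p)⁻¹ • (if i < M.n₁ then M.R₁ else M.R₂).mulVec fun j => z i (j : ℕ) w

/-- Training data point `x_i = μ_{a(i)} + √p · ω_i`. -/
def x (M : Model) (z : ℕ → ℕ → Ω → ℝ) (i : ℕ) (w : Ω) : Fin M.p → ℝ :=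
  (if i < M.n₁ then M.μ₁ else M.μ₂) + Real.sqrt M.p • M.omega z i w

/-- Sample mean of the `n` training points. -/
def xbar (M : Model) (z : ℕ → ℕ → Ω → ℝ) (n : ℕ) (w : Ω) : Fin M.p → ℝ :=
  (n : ℝ)⁻¹ • ∑ i ∈ Finset.range n, M.x z i w

/-- Noise vector of the new datum of class `a` (`a = 0` means class 1, `a = 1` class 2),
built from the independent row `n` of the Gaussian array. -/
def omegaNew (M : Model) (a : Fin 2) (z : ℕ → ℕ → Ω → ℝ) (n : ℕ) (w : Ω) : Fin M.p → ℝ :=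
  (Real.sqrt M.p)⁻¹ • (if a = 0 then M.R₁ else M.R₂).mulVec fun j => z n (j : ℕ) w

/-- The new datum of class `a`. -/
def xNew (M : Model) (a : Fin 2) (z : ℕ → ℕ → Ω → ℝ) (n : ℕ) (w : Ω) : Fin M.p → ℝ :=
  (if a = 0 then M.μ₁ else M.μ₂) + Real.sqrt M.p • M.omegaNew a z n w

/-- Standard label vector: `-1` on class 1, `+1` on class 2. -/
def y (M : Model) (n : ℕ) : Fin n → ℝ := fun i => if (i : ℕ) < M.n₁ then -1 else 1

/-- Normalized label vector: `-1/c₁` on class 1, `+1/c₂` on class 2, `c_a = n_a/n`. -/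
def ystar (M : Model) (n : ℕ) : Fin n → ℝ :=
  fun i => if (i : ℕ) < M.n₁ then -(((M.n₁ : ℝ) / n)⁻¹) else ((M.n₂ : ℝ) / n)⁻¹

/-- Kernel matrix `K = (f(‖x_i - x_j‖²/p))_{i,j}`. -/
def K (M : Model) (f : ℝ → ℝ) (n : ℕ) (z : ℕ → ℕ → Ω → ℝ) (w : Ω) :
    Matrix (Fin n) (Fin n) ℝ :=
  Matrix.of fun i j => f (sq (M.x z (i : ℕ) w - M.x z (j : ℕ) w) / M.p)

/-- `S = K + (n/γ) I`. -/
def S (M : Model) (f : ℝ → ℝ) (γ : ℝ) (n : ℕ) (z : ℕ → ℕ → Ω → ℝ) (w : Ω) :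
    Matrix (Fin n) (Fin n) ℝ :=
  M.K f n z w + ((n : ℝ) / γ) • (1 : Matrix (Fin n) (Fin n) ℝ)

/-- Kernel vector `k(x) = (f(‖x - x_j‖²/p))_j` of a point `x₀`. -/
def k (M : Model) (f : ℝ → ℝ) (n : ℕ) (z : ℕ → ℕ → Ω → ℝ) (w : Ω) (x₀ : Fin M.p → ℝ) :
    Fin n → ℝ :=
  fun j => f (sq (x₀ - M.x z (j : ℕ) w) / M.p)

/-- Bias `b = (1ᵀ S⁻¹ yv)/(1ᵀ S⁻¹ 1)` for a label vector `yv`. -/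
def bias (M : Model) (f : ℝ → ℝ) (γ : ℝ) (n : ℕ) (yv : Fin n → ℝ)
    (z : ℕ → ℕ → Ω → ℝ) (w : Ω) : ℝ :=
  (ones n ⬝ᵥ (M.S f γ n z w)⁻¹.mulVec yv) / (ones n ⬝ᵥ (M.S f γ n z w)⁻¹.mulVec (ones n))

/-- Lagrange multipliers `α = S⁻¹ (yv - b 1)`. -/
def alpha (M : Model) (f : ℝ → ℝ) (γ : ℝ) (n : ℕ) (yv : Fin n → ℝ)
    (z : ℕ → ℕ → Ω → ℝ) (w : Ω) : Fin n → ℝ :=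
  (M.S f γ n z w)⁻¹.mulVec (yv - M.bias f γ n yv z w • ones n)

/-- LS-SVM decision function `g(x₀) = αᵀ k(x₀) + b` for label vector `yv`. -/
def g (M : Model) (f : ℝ → ℝ) (γ : ℝ) (n : ℕ) (yv : Fin n → ℝ)
    (z : ℕ → ℕ → Ω → ℝ) (w : Ω) (x₀ : Fin M.p → ℝ) : ℝ :=
  M.alpha f γ n yv z w ⬝ᵥ M.k f n z w x₀ + M.bias f γ n yv z w

/-- The matrix `Ω = [ω₁, …, ω_n] ∈ ℝ^{p×n}`. -/
def OmegaMat (M : Model) (z : ℕ → ℕ → Ω → ℝ) (n : ℕ) (w : Ω) : Matrix (Fin M.p) (Fin n) ℝ :=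
  Matrix.of fun j i => M.omega z (i : ℕ) w j

/-- The deterministic "informative" quantity `𝔇`. -/
def Dterm (M : Model) (C₁ C₂ : Matrix (Fin M.p) (Fin M.p) ℝ) (f : ℝ → ℝ) (τ : ℝ) : ℝ :=
  -(2 * deriv f τ / M.p) * sq (M.μ₂ - M.μ₁)
    + deriv (deriv f) τ / (M.p : ℝ) ^ 2 * (Matrix.trace (C₂ - C₁)) ^ 2
    + 2 * deriv (deriv f) τ / (M.p : ℝ) ^ 2 * Matrix.trace ((C₂ - C₁) * (C₂ - C₁))

/-- The random "noise" quantity `𝔓` for a new datum of class `a`. -/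
def Pterm (M : Model) (a : Fin 2) (C₁ C₂ : Matrix (Fin M.p) (Fin M.p) ℝ)
    (f : ℝ → ℝ) (τ : ℝ) (n : ℕ) (z : ℕ → ℕ → Ω → ℝ) (w : Ω) : ℝ :=
  let c₁ : ℝ := (M.n₁ : ℝ) / n;
  let c₂ : ℝ := (M.n₂ : ℝ) / n;
  let Ca : Matrix (Fin M.p) (Fin M.p) ℝ := if a = 0 then C₁ else C₂;
  let ωx : Fin M.p → ℝ := M.omegaNew a z n w;
  let ψx : ℝ := sq ωx - Matrix.trace Ca / M.p;
  -(2 * deriv f τ / n) * (M.y n ⬝ᵥ (Pmat n).mulVec ((M.OmegaMat z n w)ᵀ.mulVec ωx))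
    - (4 * c₁ * c₂ * deriv f τ / Real.sqrt M.p) * ((M.μ₂ - M.μ₁) ⬝ᵥ ωx)
    + 2 * c₁ * c₂ * deriv (deriv f) τ * ψx * (Matrix.trace (C₂ - C₁) / M.p)

/-- The random equivalent `ĝ(x)` of the decision function for a new datum of class `a`. -/
def ghat (M : Model) (a : Fin 2) (C₁ C₂ : Matrix (Fin M.p) (Fin M.p) ℝ)
    (f : ℝ → ℝ) (τ γ : ℝ) (n : ℕ) (z : ℕ → ℕ → Ω → ℝ) (w : Ω) : ℝ :=
  let c₁ : ℝ := (M.n₁ : ℝ) / n;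
  let c₂ : ℝ := (M.n₂ : ℝ) / n;
  c₂ - c₁ + γ * (M.Pterm a C₁ C₂ f τ n z w
    + (if a = 0 then -(2 * c₁ * c₂ ^ 2) else 2 * c₁ ^ 2 * c₂) * M.Dterm C₁ C₂ f τ)

/-- The asymptotic mean `E_a` of the decision function (standard labels). -/
def Emean (M : Model) (a : Fin 2) (C₁ C₂ : Matrix (Fin M.p) (Fin M.p) ℝ)
    (f : ℝ → ℝ) (τ γ : ℝ) (n : ℕ) : ℝ :=
  let c₁ : ℝ := (M.n₁ : ℝ) / n;
  let c₂ : ℝ := (M.n₂ : ℝ) / n;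
  c₂ - c₁ + (if a = 0 then -(2 * c₂) else 2 * c₁) * (c₁ * c₂) * γ * M.Dterm C₁ C₂ f τ

/-- The sum `V₁^a + V₂^a + V₃^a`. -/
def Vsum (M : Model) (a : Fin 2) (C₁ C₂ : Matrix (Fin M.p) (Fin M.p) ℝ)
    (f : ℝ → ℝ) (τ : ℝ) (n : ℕ) : ℝ :=
  let c₁ : ℝ := (M.n₁ : ℝ) / n;
  let c₂ : ℝ := (M.n₂ : ℝ) / n;
  let Ca : Matrix (Fin M.p) (Fin M.p) ℝ := if a = 0 then C₁ else C₂;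
  (deriv (deriv f) τ) ^ 2 / (M.p : ℝ) ^ 4 * (Matrix.trace (C₂ - C₁)) ^ 2
      * Matrix.trace (Ca * Ca)
    + 2 * (deriv f τ) ^ 2 / (M.p : ℝ) ^ 2 * ((M.μ₂ - M.μ₁) ⬝ᵥ Ca.mulVec (M.μ₂ - M.μ₁))
    + 2 * (deriv f τ) ^ 2 / ((n : ℝ) * (M.p : ℝ) ^ 2)
      * (Matrix.trace (C₁ * Ca) / c₁ + Matrix.trace (C₂ * Ca) / c₂)

/-- The asymptotic variance `Var_a` (standard labels). -/
def Vvar (M : Model) (a : Fin 2) (C₁ C₂ : Matrix (Fin M.p) (Fin M.p) ℝ)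
    (f : ℝ → ℝ) (τ γ : ℝ) (n : ℕ) : ℝ :=
  8 * γ ^ 2 * ((M.n₁ : ℝ) / n) ^ 2 * ((M.n₂ : ℝ) / n) ^ 2 * M.Vsum a C₁ C₂ f τ n

/-- The asymptotic mean `E*_a` (normalized labels). -/
def EmeanStar (M : Model) (a : Fin 2) (C₁ C₂ : Matrix (Fin M.p) (Fin M.p) ℝ)
    (f : ℝ → ℝ) (τ γ : ℝ) (n : ℕ) : ℝ :=
  (if a = 0 then -((M.n₂ : ℝ) / n) else (M.n₁ : ℝ) / n) * γ * M.Dterm C₁ C₂ f τ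

/-- The asymptotic variance `Var*_a` (normalized labels). -/
def VvarStar (M : Model) (a : Fin 2) (C₁ C₂ : Matrix (Fin M.p) (Fin M.p) ℝ)
    (f : ℝ → ℝ) (τ γ : ℝ) (n : ℕ) : ℝ :=
  2 * γ ^ 2 * M.Vsum a C₁ C₂ f τ n

end Model

open scoped ComplexOrder in
/-- The positive semidefinite square root of a positive semidefinite matrix
(removed from Mathlib; restored with its December 2024 definition). -/
def _root_.Matrix.PosSemidef.sqrt {n 𝕜 : Type*} [Fintype n] [DecidableEq n] [RCLike 𝕜]
    {A : Matrix n n 𝕜} (hA : A.PosSemidef) : Matrix n n 𝕜 :=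
  hA.1.eigenvectorUnitary.1 * diagonal ((↑) ∘ (√·) ∘ hA.1.eigenvalues) *
  (star hA.1.eigenvectorUnitary : Matrix n n 𝕜)

open scoped ComplexOrder in
lemma _root_.Matrix.PosSemidef.isHermitian_sqrt {n 𝕜 : Type*} [Fintype n] [DecidableEq n]
    [RCLike 𝕜] {A : Matrix n n 𝕜} (hA : A.PosSemidef) : hA.sqrt.IsHermitian := by
  simp only [Matrix.IsHermitian, Matrix.PosSemidef.sqrt, Matrix.conjTranspose_mul,
    Matrix.diagonal_conjTranspose, Matrix.mul_assoc]
  have hd : star (RCLike.ofReal ∘ (fun x => √x) ∘ hA.1.eigenvalues : n → 𝕜)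
      = RCLike.ofReal ∘ (fun x => √x) ∘ hA.1.eigenvalues := by
    funext i
    simp
  rw [hd]
  simp only [← Matrix.star_eq_conjTranspose, Unitary.coe_star, star_star]

open scoped ComplexOrder in
lemma _root_.Matrix.PosSemidef.sqrt_mul_self {n 𝕜 : Type*} [Fintype n] [DecidableEq n]
    [RCLike 𝕜] {A : Matrix n n 𝕜} (hA : A.PosSemidef) : hA.sqrt * hA.sqrt = A := by
  have hU : (star hA.1.eigenvectorUnitary : Matrix n n 𝕜) * hA.1.eigenvectorUnitary.1 = 1 :=
    Unitary.coe_star_mul_self _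
  have hD : diagonal (((↑) ∘ (√·) ∘ hA.1.eigenvalues : n → 𝕜))
      * diagonal ((↑) ∘ (√·) ∘ hA.1.eigenvalues)
      = diagonal (RCLike.ofReal ∘ hA.1.eigenvalues) := by
    rw [diagonal_mul_diagonal]
    congr 1
    funext v
    simp [← RCLike.ofReal_mul, Real.mul_self_sqrt (hA.eigenvalues_nonneg v)]
  conv_rhs => rw [hA.1.spectral_theorem, Unitary.conjStarAlgAut_apply]
  simp only [Matrix.PosSemidef.sqrt]
  rw [← hD]
  simp only [Matrix.mul_assoc]
  rw [← Matrix.mul_assoc (star hA.1.eigenvectorUnitary : Matrix n n 𝕜), hU, Matrix.one_mul]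



/-! ### Auxiliary lemmas for `statement10` -/

section Statement10Aux

open scoped RealInnerProductSpace ENNReal

lemma gauss_eq' : gaussianReal 0 1
    = MeasureTheory.volume.withDensity (fun x => ((gaussianPDFReal 0 1 x).toNNReal : ℝ≥0∞)) := by
  rw [ProbabilityTheory.gaussianReal_of_var_ne_zero 0 one_ne_zero]
  rfl

lemma pdf_meas' : Measurable (fun x => (gaussianPDFReal 0 1 x).toNNReal) :=
  (ProbabilityTheory.measurable_gaussianPDFReal 0 1).real_toNNReal

lemma integral_gauss' (g : ℝ → ℝ) :
    ∫ x, g x ∂(gaussianReal 0 1) = ∫ x, gaussianPDFReal 0 1 x * g x := by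
  rw [gauss_eq', integral_withDensity_eq_integral_smul pdf_meas' g]
  congr 1
  funext x
  simp [NNReal.smul_def, Real.coe_toNNReal _ (ProbabilityTheory.gaussianPDFReal_nonneg 0 1 x)]

lemma integrable_gauss_iff' (g : ℝ → ℝ) :
    Integrable g (gaussianReal 0 1) ↔
      Integrable (fun x => gaussianPDFReal 0 1 x * g x) MeasureTheory.volume := by
  rw [gauss_eq', integrable_withDensity_iff_integrable_smul pdf_meas']
  constructor <;> intro h <;> refine h.congr (Filter.Eventually.of_forall fun x => ?_) <;>
    simp [NNReal.smul_def, Real.coe_toNNReal _ (ProbabilityTheory.gaussianPDFReal_nonneg 0 1 x)]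

lemma pdf_eq' (x : ℝ) :
    gaussianPDFReal 0 1 x = (Real.sqrt (2 * Real.pi))⁻¹ * Real.exp (-(1/2) * x ^ 2) := by
  simp only [ProbabilityTheory.gaussianPDFReal, NNReal.coe_one, mul_one, sub_zero]
  congr 1
  ring

lemma pdf_even' (x : ℝ) : gaussianPDFReal 0 1 (-x) = gaussianPDFReal 0 1 x := by
  simp [pdf_eq']

lemma m2_integrable' : Integrable (fun x : ℝ => x ^ 2) (gaussianReal 0 1) := by
  rw [integrable_gauss_iff']
  have h := (integrable_rpow_mul_exp_neg_mul_sq (by norm_num : (0:ℝ) < 1/2)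
    (by norm_num : (-1:ℝ) < 2)).const_mul (Real.sqrt (2 * Real.pi))⁻¹
  refine h.congr (Filter.Eventually.of_forall fun x => ?_)
  simp only []
  rw [pdf_eq']
  rw [show ((2:ℝ)) = ((2:ℕ):ℝ) by norm_num, Real.rpow_natCast]
  push_cast
  ring

lemma mem2' : MemLp (id : ℝ → ℝ) 2 (gaussianReal 0 1) := by
  rw [memLp_two_iff_integrable_sq aestronglyMeasurable_id]
  simpa using m2_integrable'

lemma m1_eq' : ∫ x, x ∂(gaussianReal 0 1) = 0 := by
  rw [integral_gauss']
  have h := integral_neg_eq_self (fun x => gaussianPDFReal 0 1 x * x)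
    (MeasureTheory.volume : Measure ℝ)
  simp only [pdf_even', mul_neg] at h
  rw [integral_neg] at h
  linarith

variable {Ωs : Type*} [MeasurableSpace Ωs]

lemma z_mem2' (P : Measure Ωs) (z : ℕ → ℕ → Ωs → ℝ) (hz_meas : ∀ i j, Measurable (z i j))
    (hz_gauss : ∀ i j, Measure.map (z i j) P = gaussianReal 0 1) (k : ℕ × ℕ) :
    MemLp (z k.1 k.2) 2 P := by
  have h : MemLp (id : ℝ → ℝ) 2 (Measure.map (z k.1 k.2) P) := by
    rw [hz_gauss k.1 k.2]; exact mem2'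
  have := (memLp_map_measure_iff aestronglyMeasurable_id
    (hz_meas k.1 k.2).aemeasurable).mp h
  simpa using this

lemma z_int' (P : Measure Ωs) [IsFiniteMeasure P] (z : ℕ → ℕ → Ωs → ℝ) (hz_meas : ∀ i j, Measurable (z i j))
    (hz_gauss : ∀ i j, Measure.map (z i j) P = gaussianReal 0 1) (k : ℕ × ℕ) :
    Integrable (z k.1 k.2) P :=
  (z_mem2' P z hz_meas hz_gauss k).integrable one_le_two

lemma z_sq_int' (P : Measure Ωs) (z : ℕ → ℕ → Ωs → ℝ) (hz_meas : ∀ i j, Measurable (z i j))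
    (hz_gauss : ∀ i j, Measure.map (z i j) P = gaussianReal 0 1) (k : ℕ × ℕ) :
    Integrable (fun w => z k.1 k.2 w ^ 2) P := by
  have := (memLp_two_iff_integrable_sq
    (hz_meas k.1 k.2).aestronglyMeasurable).mp (z_mem2' P z hz_meas hz_gauss k)
  simpa using this

lemma z_mean' (P : Measure Ωs) (z : ℕ → ℕ → Ωs → ℝ) (hz_meas : ∀ i j, Measurable (z i j))
    (hz_gauss : ∀ i j, Measure.map (z i j) P = gaussianReal 0 1) (k : ℕ × ℕ) :
    ∫ w, z k.1 k.2 w ∂P = 0 := by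
  have : ∫ x, (id : ℝ → ℝ) x ∂(Measure.map (z k.1 k.2) P) = ∫ w, z k.1 k.2 w ∂P :=
    integral_map (hz_meas k.1 k.2).aemeasurable aestronglyMeasurable_id
  rw [← this, hz_gauss k.1 k.2]
  simpa using m1_eq'

lemma z_sq_mean' (P : Measure Ωs) (z : ℕ → ℕ → Ωs → ℝ) (hz_meas : ∀ i j, Measurable (z i j))
    (hz_gauss : ∀ i j, Measure.map (z i j) P = gaussianReal 0 1) (k : ℕ × ℕ) :
    ∫ w, z k.1 k.2 w ^ 2 ∂P = ∫ x, x ^ 2 ∂(gaussianReal 0 1) := by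
  have : ∫ x, (fun x : ℝ => x ^ 2) x ∂(Measure.map (z k.1 k.2) P)
      = ∫ w, z k.1 k.2 w ^ 2 ∂P :=
    integral_map (hz_meas k.1 k.2).aemeasurable
      (measurable_id.pow_const 2).aestronglyMeasurable
  rw [← this, hz_gauss k.1 k.2]

lemma prod_int' (P : Measure Ωs) [IsFiniteMeasure P] (z : ℕ → ℕ → Ωs → ℝ) (hz_meas : ∀ i j, Measurable (z i j))
    (hz_indep : iIndepFun
      (fun ij : ℕ × ℕ => z ij.1 ij.2) P)
    (hz_gauss : ∀ i j, Measure.map (z i j) P = gaussianReal 0 1) (k l : ℕ × ℕ) :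
    Integrable (fun w => z k.1 k.2 w * z l.1 l.2 w) P := by
  by_cases hkl : k = l
  · subst hkl
    simpa [pow_two] using z_sq_int' P z hz_meas hz_gauss k
  · have hind : IndepFun (z k.1 k.2) (z l.1 l.2) P := hz_indep.indepFun hkl
    simpa [Pi.mul_def] using hind.integrable_mul (z_int' P z hz_meas hz_gauss k)
      (z_int' P z hz_meas hz_gauss l)

lemma prod_mean' (P : Measure Ωs) [IsFiniteMeasure P] (z : ℕ → ℕ → Ωs → ℝ) (hz_meas : ∀ i j, Measurable (z i j))
    (hz_indep : iIndepFun
      (fun ij : ℕ × ℕ => z ij.1 ij.2) P)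
    (hz_gauss : ∀ i j, Measure.map (z i j) P = gaussianReal 0 1) (k l : ℕ × ℕ) (hkl : k ≠ l) :
    ∫ w, z k.1 k.2 w * z l.1 l.2 w ∂P = 0 := by
  have hind : IndepFun (z k.1 k.2) (z l.1 l.2) P := hz_indep.indepFun hkl
  rw [hind.integral_fun_mul_eq_mul_integral (hz_meas k.1 k.2).aestronglyMeasurable
    (hz_meas l.1 l.2).aestronglyMeasurable,
    z_mean' P z hz_meas hz_gauss k, zero_mul]

lemma moment_key' (P : Measure Ωs) [IsFiniteMeasure P] (z : ℕ → ℕ → Ωs → ℝ) (hz_meas : ∀ i j, Measurable (z i j))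
    (hz_indep : iIndepFun
      (fun ij : ℕ × ℕ => z ij.1 ij.2) P)
    (hz_gauss : ∀ i j, Measure.map (z i j) P = gaussianReal 0 1)
    (s : Finset (ℕ × ℕ)) (c : ℕ × ℕ → ℝ) :
    Integrable (fun w => (∑ k ∈ s, c k * z k.1 k.2 w) ^ 2) P ∧
      ∫ w, (∑ k ∈ s, c k * z k.1 k.2 w) ^ 2 ∂P
        = (∑ k ∈ s, c k ^ 2) * ∫ x, x ^ 2 ∂(gaussianReal 0 1) := by
  have hexp : ∀ w, (∑ k ∈ s, c k * z k.1 k.2 w) ^ 2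
      = ∑ k ∈ s, ∑ l ∈ s, (c k * c l) * (z k.1 k.2 w * z l.1 l.2 w) := by
    intro w
    rw [pow_two, Finset.sum_mul_sum]
    exact Finset.sum_congr rfl fun k _ => Finset.sum_congr rfl fun l _ => by ring
  have hint : ∀ k ∈ s, ∀ l ∈ s,
      Integrable (fun w => (c k * c l) * (z k.1 k.2 w * z l.1 l.2 w)) P :=
    fun k _ l _ => (prod_int' P z hz_meas hz_indep hz_gauss k l).const_mul _
  have hint2 : ∀ k ∈ s, Integrable
      (fun w => ∑ l ∈ s, (c k * c l) * (z k.1 k.2 w * z l.1 l.2 w)) P :=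
    fun k hk => integrable_finset_sum s (hint k hk)
  constructor
  · refine (integrable_finset_sum s hint2).congr
      (Filter.Eventually.of_forall fun w => ?_)
    exact (hexp w).symm
  · calc ∫ w, (∑ k ∈ s, c k * z k.1 k.2 w) ^ 2 ∂P
        = ∫ w, ∑ k ∈ s, ∑ l ∈ s, (c k * c l) * (z k.1 k.2 w * z l.1 l.2 w) ∂P :=
          integral_congr_ae (Filter.Eventually.of_forall fun w => hexp w)
      _ = ∑ k ∈ s, ∑ l ∈ s, (c k * c l) * ∫ w, z k.1 k.2 w * z l.1 l.2 w ∂P := by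
          rw [integral_finset_sum s hint2]
          exact Finset.sum_congr rfl fun k hk => by
            rw [integral_finset_sum s (hint k hk)]
            exact Finset.sum_congr rfl fun l hl => integral_const_mul _ _
      _ = ∑ k ∈ s, ∑ l ∈ s, (if k = l then c k ^ 2 * ∫ x, x ^ 2 ∂(gaussianReal 0 1) else 0) := by
          refine Finset.sum_congr rfl fun k _ => Finset.sum_congr rfl fun l _ => ?_
          by_cases hkl : k = l
          · subst hkl
            rw [if_pos rfl]
            rw [show (fun w => z k.1 k.2 w * z k.1 k.2 w) = fun w => z k.1 k.2 w ^ 2 by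
              funext w; ring, z_sq_mean' P z hz_meas hz_gauss k]
            ring
          · rw [prod_mean' P z hz_meas hz_indep hz_gauss k l hkl, if_neg hkl, mul_zero]
      _ = (∑ k ∈ s, c k ^ 2) * ∫ x, x ^ 2 ∂(gaussianReal 0 1) := by
          rw [Finset.sum_mul]
          exact Finset.sum_congr rfl fun k hk => by
            rw [Finset.sum_ite_eq s k (fun _ => c k ^ 2 * ∫ x, x ^ 2 ∂(gaussianReal 0 1)),
              if_pos hk]

lemma quad_bound' {p : ℕ} (C : Matrix (Fin p) (Fin p) ℝ) (x : Fin p → ℝ) :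
    x ⬝ᵥ C.mulVec x ≤ ‖Matrix.toEuclideanCLM (𝕜 := ℝ) C‖ * ∑ j, x j ^ 2 := by
  set x' : EuclideanSpace ℝ (Fin p) := (WithLp.equiv 2 _).symm x with hx'
  have h1 : x ⬝ᵥ C.mulVec x = ⟪x', Matrix.toEuclideanCLM (𝕜 := ℝ) C x'⟫ := by
    rw [hx', Matrix.inner_toEuclideanCLM]
    rfl
  have h2 : (∑ j, x j ^ 2) = ‖x'‖ ^ 2 := by
    rw [hx', EuclideanSpace.norm_eq, Real.sq_sqrt (by positivity)]
    simp [Real.norm_eq_abs, sq_abs]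
  rw [h1, h2]
  calc ⟪x', Matrix.toEuclideanCLM (𝕜 := ℝ) C x'⟫
      ≤ ‖x'‖ * ‖Matrix.toEuclideanCLM (𝕜 := ℝ) C x'‖ := real_inner_le_norm _ _
    _ ≤ ‖x'‖ * (‖Matrix.toEuclideanCLM (𝕜 := ℝ) C‖ * ‖x'‖) := by
        gcongr
        exact (Matrix.toEuclideanCLM (𝕜 := ℝ) C).le_opNorm x'
    _ = ‖Matrix.toEuclideanCLM (𝕜 := ℝ) C‖ * ‖x'‖ ^ 2 := by ring

lemma sq_vecMul' {p : ℕ} {C : Matrix (Fin p) (Fin p) ℝ} (hC : C.PosSemidef) (x : Fin p → ℝ) :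
    (∑ j, (Matrix.vecMul x hC.sqrt) j ^ 2) = x ⬝ᵥ C.mulVec x := by
  have hsym : hC.sqrtᵀ = hC.sqrt := by
    have h := hC.isHermitian_sqrt
    rwa [Matrix.IsHermitian, Matrix.conjTranspose_eq_transpose_of_trivial] at h
  have hv : Matrix.vecMul x hC.sqrt = hC.sqrt.mulVec x := by
    rw [← Matrix.mulVec_transpose, hsym]
  rw [hv]
  have h0 : (∑ j, (hC.sqrt.mulVec x) j ^ 2) = (hC.sqrt.mulVec x) ⬝ᵥ (hC.sqrt.mulVec x) := by
    simp [dotProduct, pow_two]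
  rw [h0, Matrix.dotProduct_mulVec]
  have hv2 : Matrix.vecMul (hC.sqrt.mulVec x) hC.sqrt = (hC.sqrt * hC.sqrt).mulVec x := by
    rw [← Matrix.mulVec_transpose, hsym, Matrix.mulVec_mulVec]
  rw [hv2, hC.sqrt_mul_self, dotProduct_comm]

/-- coefficient of `z i j` in `κ_n`. -/
def coefA (m : Model) (n : ℕ) (k : ℕ × ℕ) : ℝ :=
  4 / (n * Real.sqrt m.p) * (if k.1 < m.n₁ then -((m.n₂ : ℝ) / n) else (m.n₁ : ℝ) / n) *
    ((Real.sqrt m.p)⁻¹ *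
      (if h : k.2 < m.p then
        Matrix.vecMul (m.μ₂ - m.μ₁) (if k.1 < m.n₁ then m.R₁ else m.R₂) ⟨k.2, h⟩
       else 0))

lemma dot_sum' {p : ℕ} (v : Fin p → ℝ) (s : Finset ℕ) (f : ℕ → Fin p → ℝ) :
    v ⬝ᵥ (∑ i ∈ s, f i) = ∑ i ∈ s, v ⬝ᵥ f i := by
  simp only [dotProduct, Finset.sum_apply, Finset.mul_sum]
  rw [Finset.sum_comm]

lemma dot_omega' {Ω : Type*} (m : Model) (z : ℕ → ℕ → Ω → ℝ) (i : ℕ) (w : Ω) :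
    (m.μ₂ - m.μ₁) ⬝ᵥ m.omega z i w
      = (Real.sqrt m.p)⁻¹ * ∑ j ∈ Finset.range m.p,
          (if h : j < m.p then
            Matrix.vecMul (m.μ₂ - m.μ₁) (if i < m.n₁ then m.R₁ else m.R₂) ⟨j, h⟩ else 0)
          * z i j w := by
  rw [Model.omega, dotProduct_smul, smul_eq_mul, Matrix.dotProduct_mulVec]
  congr 1
  rw [show (Matrix.vecMul (m.μ₂ - m.μ₁) (if i < m.n₁ then m.R₁ else m.R₂)
      ⬝ᵥ fun j : Fin m.p => z i (j : ℕ) w)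
    = ∑ j : Fin m.p, Matrix.vecMul (m.μ₂ - m.μ₁) (if i < m.n₁ then m.R₁ else m.R₂) j
        * z i (j : ℕ) w from rfl]
  rw [← Fin.sum_univ_eq_sum_range (fun j => (if h : j < m.p then
      Matrix.vecMul (m.μ₂ - m.μ₁) (if i < m.n₁ then m.R₁ else m.R₂) ⟨j, h⟩ else 0) * z i j w) m.p]
  refine Finset.sum_congr rfl fun j _ => ?_
  rw [dif_pos j.isLt]

lemma kappa_eq' {Ω : Type*} (m : Model) (z : ℕ → ℕ → Ω → ℝ) (n : ℕ) (hn : m.n₁ ≤ n) (w : Ω) :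
    4 / ((n : ℝ) * Real.sqrt m.p) *
        ((m.μ₂ - m.μ₁) ⬝ᵥ
          (-(((m.n₂ : ℝ) / n) • ∑ i ∈ Finset.range m.n₁, m.omega z i w)
            + ((m.n₁ : ℝ) / n) • ∑ i ∈ Finset.Ico m.n₁ n, m.omega z i w))
      = ∑ k ∈ Finset.range n ×ˢ Finset.range m.p, coefA m n k * z k.1 k.2 w := by
  have hinner : ∀ i, (∑ j ∈ Finset.range m.p, coefA m n (i, j) * z i j w)
      = 4 / ((n : ℝ) * Real.sqrt m.p) * ((if i < m.n₁ then -((m.n₂ : ℝ) / n) else (m.n₁ : ℝ) / n)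
        * ((m.μ₂ - m.μ₁) ⬝ᵥ m.omega z i w)) := by
    intro i
    rw [dot_omega']
    simp only [Finset.mul_sum]
    refine Finset.sum_congr rfl fun j _ => ?_
    rw [coefA]
    ring
  rw [Finset.sum_product, Finset.sum_congr rfl (fun i _ => hinner i), ← Finset.mul_sum]
  congr 1
  have h1 : (∑ i ∈ Finset.range m.n₁,
        (if i < m.n₁ then -((m.n₂ : ℝ) / n) else (m.n₁ : ℝ) / n)
          * ((m.μ₂ - m.μ₁) ⬝ᵥ m.omega z i w))
      = -((m.n₂ : ℝ) / n) * ∑ i ∈ Finset.range m.n₁, (m.μ₂ - m.μ₁) ⬝ᵥ m.omega z i w := by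
    rw [Finset.mul_sum]
    refine Finset.sum_congr rfl fun i hi => ?_
    rw [if_pos (Finset.mem_range.mp hi)]
  have h2 : (∑ i ∈ Finset.Ico m.n₁ n,
        (if i < m.n₁ then -((m.n₂ : ℝ) / n) else (m.n₁ : ℝ) / n)
          * ((m.μ₂ - m.μ₁) ⬝ᵥ m.omega z i w))
      = ((m.n₁ : ℝ) / n) * ∑ i ∈ Finset.Ico m.n₁ n, (m.μ₂ - m.μ₁) ⬝ᵥ m.omega z i w := by
    rw [Finset.mul_sum]
    refine Finset.sum_congr rfl fun i hi => ?_
    rw [if_neg (not_lt.mpr (Finset.mem_Ico.mp hi).1)]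
  rw [dotProduct_add, dotProduct_neg, dotProduct_smul,
    dotProduct_smul, dot_sum', dot_sum', ← Finset.sum_range_add_sum_Ico _ hn, h1, h2]
  simp only [smul_eq_mul]
  ring

lemma coef_bound' (m : Model) (n : ℕ) (hn : m.n₁ + m.n₂ = n)
    (C1 C2 : Matrix (Fin m.p) (Fin m.p) ℝ) (hC1 : C1.PosSemidef) (hC2 : C2.PosSemidef)
    (hR1 : m.R₁ = hC1.sqrt) (hR2 : m.R₂ = hC2.sqrt)
    (Bμ BC : ℝ) (hBμ : sq (m.μ₂ - m.μ₁) ≤ Bμ)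
    (hB1 : ‖Matrix.toEuclideanCLM (𝕜 := ℝ) C1‖ ≤ BC)
    (hB2 : ‖Matrix.toEuclideanCLM (𝕜 := ℝ) C2‖ ≤ BC) :
    ∑ k ∈ Finset.range n ×ˢ Finset.range m.p, (coefA m n k) ^ 2
      ≤ 16 / ((n : ℝ) * (m.p : ℝ) ^ 2) * (BC * Bμ) := by
  have hBμ0 : 0 ≤ Bμ := le_trans (Finset.sum_nonneg fun j _ => sq_nonneg _) hBμ
  have hBC0 : 0 ≤ BC := le_trans (norm_nonneg _) hB1
  rcases Nat.eq_zero_or_pos n with hn0 | hn0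
  · subst hn0
    simp [Finset.range_zero]
  rcases Nat.eq_zero_or_pos m.p with hp0 | hp0
  · simp [hp0, Finset.range_zero]
  have hpR : (0:ℝ) < m.p := by exact_mod_cast hp0
  have hnR : (0:ℝ) < n := by exact_mod_cast hn0
  have hpe : (m.p:ℝ) ≠ 0 := ne_of_gt hpR
  have hne : (n:ℝ) ≠ 0 := ne_of_gt hnR
  have hquad : ∀ i : ℕ, (∑ j : Fin m.p,
      (Matrix.vecMul (m.μ₂ - m.μ₁) (if i < m.n₁ then m.R₁ else m.R₂)) j ^ 2) ≤ BC * Bμ := by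
    intro i
    by_cases hi : i < m.n₁
    · rw [if_pos hi, hR1, sq_vecMul' hC1]
      exact le_trans (quad_bound' C1 _) (mul_le_mul hB1 hBμ
        (Finset.sum_nonneg fun j _ => sq_nonneg _) hBC0)
    · rw [if_neg hi, hR2, sq_vecMul' hC2]
      exact le_trans (quad_bound' C2 _) (mul_le_mul hB2 hBμ
        (Finset.sum_nonneg fun j _ => sq_nonneg _) hBC0)
  have hsgn : ∀ i : ℕ, ((if i < m.n₁ then -((m.n₂ : ℝ) / n) else (m.n₁ : ℝ) / n)) ^ 2 ≤ 1 := by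
    intro i
    have h1 : (m.n₁ : ℝ) / n ≤ 1 := by
      rw [div_le_one hnR]
      exact_mod_cast Nat.le.intro hn
    have h2 : (m.n₂ : ℝ) / n ≤ 1 := by
      rw [div_le_one hnR]
      exact_mod_cast Nat.le.intro (by omega : m.n₂ + m.n₁ = n)
    have h10 : (0:ℝ) ≤ (m.n₁ : ℝ) / n := by positivity
    have h20 : (0:ℝ) ≤ (m.n₂ : ℝ) / n := by positivity
    by_cases hi : i < m.n₁
    · rw [if_pos hi]; nlinarith
    · rw [if_neg hi]; nlinarith
  have hrow : ∀ i ∈ Finset.range n, (∑ j ∈ Finset.range m.p, (coefA m n (i, j)) ^ 2)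
      ≤ 16 / ((n : ℝ) ^ 2 * (m.p : ℝ) ^ 2) * (BC * Bμ) := by
    intro i _
    have hexp : (∑ j ∈ Finset.range m.p, (coefA m n (i, j)) ^ 2)
        = (4 / (n * Real.sqrt m.p)) ^ 2
          * ((if i < m.n₁ then -((m.n₂ : ℝ) / n) else (m.n₁ : ℝ) / n)) ^ 2
          * (((Real.sqrt m.p)⁻¹) ^ 2
          * ∑ j : Fin m.p,
              (Matrix.vecMul (m.μ₂ - m.μ₁) (if i < m.n₁ then m.R₁ else m.R₂)) j ^ 2) := by
      rw [← Fin.sum_univ_eq_sum_range (fun j => (coefA m n (i, j)) ^ 2) m.p]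
      simp only [Finset.mul_sum]
      refine Finset.sum_congr rfl fun j _ => ?_
      rw [coefA, dif_pos j.isLt]
      ring
    rw [hexp]
    have hA : (4 / ((n:ℝ) * Real.sqrt m.p)) ^ 2 = 16 / ((n:ℝ) ^ 2 * m.p) := by
      rw [div_pow, mul_pow, Real.sq_sqrt (le_of_lt hpR)]
      norm_num
    have hB : ((Real.sqrt (m.p:ℝ))⁻¹) ^ 2 = ((m.p:ℝ))⁻¹ := by
      rw [← Real.sqrt_inv, Real.sq_sqrt (by positivity)]
    rw [hA, hB]
    calc 16 / ((n:ℝ) ^ 2 * m.p)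
          * ((if i < m.n₁ then -((m.n₂ : ℝ) / n) else (m.n₁ : ℝ) / n)) ^ 2
          * (((m.p:ℝ))⁻¹ * ∑ j : Fin m.p,
            (Matrix.vecMul (m.μ₂ - m.μ₁) (if i < m.n₁ then m.R₁ else m.R₂)) j ^ 2)
        ≤ 16 / ((n:ℝ) ^ 2 * m.p) * 1 * (((m.p:ℝ))⁻¹ * (BC * Bμ)) := by
          apply mul_le_mul
          · exact mul_le_mul_of_nonneg_left (hsgn i) (by positivity)
          · exact mul_le_mul_of_nonneg_left (hquad i) (by positivity)
          · positivity
          · positivity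
      _ = 16 / ((n : ℝ) ^ 2 * (m.p : ℝ) ^ 2) * (BC * Bμ) := by
          rw [mul_one]
          field_simp
  calc ∑ k ∈ Finset.range n ×ˢ Finset.range m.p, (coefA m n k) ^ 2
      = ∑ i ∈ Finset.range n, ∑ j ∈ Finset.range m.p, (coefA m n (i, j)) ^ 2 :=
        Finset.sum_product (f := fun k => coefA m n k ^ 2) _ _
    _ ≤ ∑ i ∈ Finset.range n, 16 / ((n : ℝ) ^ 2 * (m.p : ℝ) ^ 2) * (BC * Bμ) :=
        Finset.sum_le_sum hrow
    _ = n * (16 / ((n : ℝ) ^ 2 * (m.p : ℝ) ^ 2) * (BC * Bμ)) := by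
        rw [Finset.sum_const, Finset.card_range]
        simp [nsmul_eq_mul]
    _ = 16 / ((n : ℝ) * (m.p : ℝ) ^ 2) * (BC * Bμ) := by
        field_simp

end Statement10Aux

/-- The cross term `κ_n` converges to `0` almost surely. -/
theorem statement10
    {Ω : Type*} [MeasurableSpace Ω] (P : Measure Ω) [IsProbabilityMeasure P]
    (z : ℕ → ℕ → Ω → ℝ)
    (hz_meas : ∀ i j, Measurable (z i j))
    (hz_indep : iIndepFun
      (fun ij : ℕ × ℕ => z ij.1 ij.2) P)
    (hz_gauss : ∀ i j, Measure.map (z i j) P = gaussianReal 0 1)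
    (M : ℕ → Model)
    (C₁ C₂ : (n : ℕ) → Matrix (Fin (M n).p) (Fin (M n).p) ℝ)
    (hC₁ : ∀ n, (C₁ n).PosSemidef) (hC₂ : ∀ n, (C₂ n).PosSemidef)
    (hR₁ : ∀ n, (M n).R₁ = (hC₁ n).sqrt) (hR₂ : ∀ n, (M n).R₂ = (hC₂ n).sqrt)
    (hsize : ∀ n, (M n).n₁ + (M n).n₂ = n)
    (c0 : ℝ) (hc0 : 0 < c0)
    (hp : Tendsto (fun n : ℕ => ((M n).p : ℝ) / n) atTop (nhds c0))
    (c1 c2 : ℝ) (hc1 : 0 < c1) (hc2 : 0 < c2)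
    (hn1 : Tendsto (fun n : ℕ => ((M n).n₁ : ℝ) / n) atTop (nhds c1))
    (hn2 : Tendsto (fun n : ℕ => ((M n).n₂ : ℝ) / n) atTop (nhds c2))
    (hμ : ∃ B : ℝ, ∀ n, sq ((M n).μ₂ - (M n).μ₁) ≤ B)
    (hCb₁ : ∃ B : ℝ, ∀ n, ‖Matrix.toEuclideanCLM (𝕜 := ℝ) (C₁ n)‖ ≤ B)
    (hCb₂ : ∃ B : ℝ, ∀ n, ‖Matrix.toEuclideanCLM (𝕜 := ℝ) (C₂ n)‖ ≤ B)
    (htr : Asymptotics.IsBigO atTop (fun n : ℕ => Matrix.trace (C₂ n - C₁ n))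
      (fun n : ℕ => Real.sqrt n))
    (τ : ℝ) (hτ : 0 < τ)
    (htau : Tendsto (fun n : ℕ => 2 / ((M n).p : ℝ) *
        Matrix.trace ((((M n).n₁ : ℝ) / n) • C₁ n + (((M n).n₂ : ℝ) / n) • C₂ n))
      atTop (nhds τ)) :
    ∀ᵐ w ∂P, Tendsto
      (fun n : ℕ => 4 / ((n : ℝ) * Real.sqrt ((M n).p)) *
        (((M n).μ₂ - (M n).μ₁) ⬝ᵥ
          (-((((M n).n₂ : ℝ) / n) • ∑ i ∈ Finset.range (M n).n₁, (M n).omega z i w)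
            + (((M n).n₁ : ℝ) / n) • ∑ i ∈ Finset.Ico (M n).n₁ n, (M n).omega z i w)))
      atTop (nhds 0) := by
  classical
  obtain ⟨Bμ, hBμ⟩ := hμ
  obtain ⟨B1, hB1⟩ := hCb₁
  obtain ⟨B2, hB2⟩ := hCb₂
  set BC : ℝ := max B1 B2 with hBCdef
  have hm2nn : (0:ℝ) ≤ ∫ x, x ^ 2 ∂(gaussianReal 0 1) := integral_nonneg fun x => sq_nonneg x
  set T : ℕ → ℝ := fun n => ∑ k ∈ Finset.range n ×ˢ Finset.range (M n).p,
    (coefA (M n) n k) ^ 2 with hTdef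
  have hT0 : ∀ n, 0 ≤ T n := fun n => Finset.sum_nonneg fun k _ => sq_nonneg _
  have hTb : ∀ n, T n ≤ 16 / ((n : ℝ) * ((M n).p : ℝ) ^ 2) * (BC * Bμ) := fun n =>
    coef_bound' (M n) n (hsize n) (C₁ n) (C₂ n) (hC₁ n) (hC₂ n) (hR₁ n) (hR₂ n) Bμ BC (hBμ n)
      (le_trans (hB1 n) (le_max_left _ _)) (le_trans (hB2 n) (le_max_right _ _))
  have hBμ0 : 0 ≤ Bμ := le_trans (Finset.sum_nonneg fun j _ => sq_nonneg _) (hBμ 0)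
  have hBC0 : 0 ≤ BC := le_trans (norm_nonneg _) (le_trans (hB1 0) (le_max_left _ _))
  have hK0 : 0 ≤ BC * Bμ := mul_nonneg hBC0 hBμ0
  -- eventual bound on `T`
  have hev : ∀ᶠ n : ℕ in atTop, (c0 / 2) * (n:ℝ) ≤ ((M n).p : ℝ) ∧ 1 ≤ n := by
    have h1 : ∀ᶠ n : ℕ in atTop, c0 / 2 < ((M n).p : ℝ) / n :=
      hp.eventually (eventually_gt_nhds (by linarith))
    filter_upwards [h1, Filter.eventually_ge_atTop 1] with n ha hb
    have hn0 : (0:ℝ) < n := by exact_mod_cast hb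
    exact ⟨(le_div_iff₀ hn0).mp ha.le, hb⟩
  have hsummable : Summable T := by
    refine summable_of_isBigO_nat (g := fun n : ℕ => 1 / (n:ℝ) ^ 3)
      (Real.summable_one_div_nat_pow.mpr (by norm_num)) ?_
    rw [Asymptotics.isBigO_iff]
    refine ⟨16 * (BC * Bμ) * (4 / c0 ^ 2), ?_⟩
    filter_upwards [hev] with n hn
    obtain ⟨h1n, h2n⟩ := hn
    have hn0 : (0:ℝ) < n := by exact_mod_cast h2n
    have hp0 : (0:ℝ) < ((M n).p : ℝ) := lt_of_lt_of_le (by positivity) h1n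
    have hden : (0:ℝ) < (n:ℝ) * ((c0/2) * (n:ℝ)) ^ 2 := by positivity
    have step1 : 16 / ((n : ℝ) * ((M n).p : ℝ) ^ 2) * (BC * Bμ)
        ≤ 16 / ((n:ℝ) * ((c0/2) * (n:ℝ)) ^ 2) * (BC * Bμ) := by
      refine mul_le_mul_of_nonneg_right ?_ hK0
      refine div_le_div_of_nonneg_left (by norm_num) hden ?_
      exact mul_le_mul_of_nonneg_left
        (pow_le_pow_left₀ (by positivity) h1n 2) (le_of_lt hn0)
    have step2 : 16 / ((n:ℝ) * ((c0/2) * (n:ℝ)) ^ 2) * (BC * Bμ)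
        = 16 * (BC * Bμ) * (4 / c0 ^ 2) * (1 / (n:ℝ) ^ 3) := by
      field_simp
      ring
    have hTn : T n ≤ 16 * (BC * Bμ) * (4 / c0 ^ 2) * (1 / (n:ℝ) ^ 3) := by
      calc T n ≤ 16 / ((n : ℝ) * ((M n).p : ℝ) ^ 2) * (BC * Bμ) := hTb n
        _ ≤ 16 / ((n:ℝ) * ((c0/2) * (n:ℝ)) ^ 2) * (BC * Bμ) := step1
        _ = 16 * (BC * Bμ) * (4 / c0 ^ 2) * (1 / (n:ℝ) ^ 3) := step2
    rw [Real.norm_of_nonneg (hT0 n), Real.norm_of_nonneg (by positivity : (0:ℝ) ≤ 1/(n:ℝ)^3)]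
    calc T n ≤ 16 * (BC * Bμ) * (4 / c0 ^ 2) * (1 / (n:ℝ) ^ 3) := hTn
      _ = 16 * (BC * Bμ) * (4 / c0 ^ 2) * (1 / (n:ℝ) ^ 3) := rfl
  have hTs : Summable (fun n => T n * ∫ x, x ^ 2 ∂(gaussianReal 0 1)) := hsummable.mul_right _
  -- second moments
  have hkey : ∀ n : ℕ,
      Integrable (fun w => (∑ k ∈ Finset.range n ×ˢ Finset.range (M n).p,
          coefA (M n) n k * z k.1 k.2 w) ^ 2) P ∧
        ∫ w, (∑ k ∈ Finset.range n ×ˢ Finset.range (M n).p,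
            coefA (M n) n k * z k.1 k.2 w) ^ 2 ∂P
          = T n * ∫ x, x ^ 2 ∂(gaussianReal 0 1) := fun n =>
    moment_key' P z hz_meas hz_indep hz_gauss _ (coefA (M n) n)
  set S : ℕ → Ω → ℝ := fun n w => ∑ k ∈ Finset.range n ×ˢ Finset.range (M n).p,
    coefA (M n) n k * z k.1 k.2 w with hSdef
  have hSmeas : ∀ n, Measurable (S n) := fun n =>
    Finset.measurable_sum _ fun k _ => (hz_meas k.1 k.2).const_mul _
  have hFmeas : ∀ n, Measurable (fun w => ENNReal.ofReal (S n w ^ 2)) := fun n =>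
    ((hSmeas n).pow_const 2).ennreal_ofReal
  have hlin : ∀ n, ∫⁻ w, ENNReal.ofReal (S n w ^ 2) ∂P
      = ENNReal.ofReal (T n * ∫ x, x ^ 2 ∂(gaussianReal 0 1)) := by
    intro n
    rw [← (hkey n).2]
    exact (ofReal_integral_eq_lintegral_ofReal (hkey n).1
      (Filter.Eventually.of_forall fun w => sq_nonneg _)).symm
  have htsum : (∑' n, ∫⁻ w, ENNReal.ofReal (S n w ^ 2) ∂P) ≠ ⊤ := by
    rw [tsum_congr hlin,
      ← ENNReal.ofReal_tsum_of_nonneg (fun n => mul_nonneg (hT0 n) hm2nn) hTs]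
    exact ENNReal.ofReal_ne_top
  have hlt : ∀ᵐ w ∂P, (∑' n, ENNReal.ofReal (S n w ^ 2)) < ⊤ := by
    refine ae_lt_top (Measurable.ennreal_tsum hFmeas) ?_
    rwa [← lintegral_tsum fun n => (hFmeas n).aemeasurable] at htsum
  filter_upwards [hlt] with w hw
  have h0 : Tendsto (fun n => ENNReal.ofReal (S n w ^ 2)) atTop (𝓝 0) :=
    ENNReal.tendsto_atTop_zero_of_tsum_ne_top hw.ne
  have h1 : Tendsto (fun n => S n w ^ 2) atTop (𝓝 0) := by
    have h := (ENNReal.tendsto_toReal (by simp : (0:ENNReal) ≠ ⊤)).comp h0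
    simp only [ENNReal.toReal_zero] at h
    refine h.congr fun n => ?_
    simp [Function.comp, ENNReal.toReal_ofReal (sq_nonneg _)]
  have h2 : Tendsto (fun n => |S n w|) atTop (𝓝 0) := by
    have h := (Real.continuous_sqrt.tendsto 0).comp h1
    simp only [Real.sqrt_zero] at h
    refine h.congr fun n => ?_
    simp [Function.comp, Real.sqrt_sq_eq_abs]
  have h3 : Tendsto (fun n => S n w) atTop (𝓝 0) :=
    (tendsto_zero_iff_abs_tendsto_zero _).mpr h2
  refine h3.congr fun n => ?_
  exact (kappa_eq' (M n) z n (Nat.le.intro (hsize n)) w).symm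

end LSSVM
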